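/- If (n_1,...,n_r) is an admissible tuple of positive integers with [n_1,...,n_r] = 0, then any strict blowup of it at any term j (1 ≤ j ≤ r) is again admissible with Hirzebruch–Jung continued fraction equal to 0. -/

import Mathlib

/-- Hirzebruch–Jung continued fraction `[n₁,…,n_k] = n₁ - 1/(n₂ - 1/(⋯ - 1/n_k))`,
evaluated from the right (with the convention `(0 : ℚ)⁻¹ = 0`, so `hjcf [n] = n`). -/
def hjcf : List ℤ → ℚ
  | [] => 0
  | a :: l => (a : ℚ) - (hjcf l)⁻¹

/-- A tuple is admissible if all intermediate denominators `[n_j,…,n_k]` (for `j ≥ 2`)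
are positive. -/
def Admissible (l : List ℤ) : Prop :=
  ∀ j : ℕ, 1 ≤ j → j < l.length → 0 < hjcf (l.drop j)

/-- Strict blowup at the `j`-th term (1-indexed): for `j ≤ r-1` it maps
`(n₁,…,n_r)` to `(n₁,…,n_{j-1}, n_j+1, 1, n_{j+1}+1, …, n_r)`;
for `j = r` it maps `(n₁,…,n_r)` to `(n₁,…,n_{r-1}, n_r+1, 1)`. -/
def psi : ℕ → List ℤ → List ℤ
  | 0, l => l
  | 1, [] => []
  | 1, [a] => [a + 1, 1]
  | 1, a :: b :: t => (a + 1) :: 1 :: (b + 1) :: t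
  | _ + 2, [] => []
  | j + 2, a :: t => a :: psi (j + 1) t

/-- `ReachesIn s a b` : `b` is obtained from `a` by a sequence of `s` strict blowups. -/
inductive ReachesIn : ℕ → List ℤ → List ℤ → Prop
  | refl (l : List ℤ) : ReachesIn 0 l l
  | step {s : ℕ} {a b : List ℤ} (j : ℕ) (hj : 1 ≤ j) (hj' : j ≤ b.length) :
      ReachesIn s a b → ReachesIn (s + 1) a (psi j b)

/-- `uTuple l = (1,2,…,2,1)` of length `l ≥ 2`; `uTuple 1 = (0)`. -/
def uTuple (l : ℕ) : List ℤ :=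
  if l ≤ 1 then [0] else 1 :: (List.replicate (l - 2) 2 ++ [1])

/-- Height: the minimal number of strict blowups needed to reach `n` from some `uTuple l`. -/
noncomputable def hgt (n : List ℤ) : ℕ :=
  sInf {s | ∃ l : ℕ, 1 ≤ l ∧ ReachesIn s (uTuple l) n}

/-- Derived tuple ("new framings after handle slides"): `n'_k = n_k` and
`n'_i = n_i + n'_{i+1} - 2`. -/
def derived : List ℤ → List ℤ
  | [] => []
  | [a] => [a]
  | a :: b :: t => (a + (derived (b :: t)).headI - 2) :: derived (b :: t)

/-- Strict blowdown at the `(j+1)`-st term (the left inverse of `psi j`): it deletes the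
entry at the `(j+1)`-st position and subtracts 1 from each adjacent incremented entry. -/
def bd : ℕ → List ℤ → List ℤ
  | 0, l => l
  | 1, [] => []
  | 1, [a] => [a]
  | 1, [a, _] => [a - 1]
  | 1, a :: _ :: c :: t => (a - 1) :: (c - 1) :: t
  | _ + 2, [] => []
  | j + 2, a :: t => a :: bd (j + 1) t

/-- One strict blowdown at the leftmost possible `1` (an entry `1` not in the first
position); if there is none, do nothing. -/
def leftmostOneStep (l : List ℤ) : List ℤ :=
  match (l.drop 1).findIdx? (fun x => x == 1) with
  | some i => bd (i + 1) l
  | none => l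

lemma hjcf_cons (a : ℤ) (l : List ℤ) : hjcf (a :: l) = (a : ℚ) - (hjcf l)⁻¹ := rfl

lemma psi_main (n : List ℤ) : ∀ j, 1 ≤ j → j ≤ n.length → Admissible n →
    hjcf (psi j n) = hjcf n ∧ Admissible (psi j n) := by
  induction n with
  | nil => intro j hj hj' _; simp at hj'; omega
  | cons a t ih =>
    intro j hj hj' hadm
    match j with
    | 0 => omega
    | 1 =>
      match t with
      | [] =>
        constructor
        · show hjcf [a+1, 1] = hjcf [a]
          rw [hjcf_cons, hjcf_cons, hjcf_cons]
          norm_num [hjcf]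
        · intro k hk hk'
          have hk2 : k = 1 := by
            have : (psi 1 [a]).length = 2 := rfl
            omega
          subst hk2
          show (0:ℚ) < hjcf [1]
          norm_num [hjcf_cons, hjcf]
      | b :: t' =>
        have hx : 0 < hjcf (b :: t') := hadm 1 le_rfl (by simp)
        have hxne : hjcf (b :: t') ≠ 0 := ne_of_gt hx
        have hb1 : hjcf ((b+1) :: t') = hjcf (b :: t') + 1 := by
          rw [hjcf_cons, hjcf_cons]; push_cast; ring
        have hb1pos : 0 < hjcf ((b+1) :: t') := by rw [hb1]; linarith
        have hb1ne : hjcf ((b+1) :: t') ≠ 0 := ne_of_gt hb1pos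
        have h1 : hjcf (1 :: (b+1) :: t') = hjcf (b :: t') / (hjcf (b :: t') + 1) := by
          rw [hjcf_cons, hb1]
          push_cast
          field_simp
          ring
        have h1pos : 0 < hjcf (1 :: (b+1) :: t') := by
          rw [h1]; positivity
        have heq : hjcf ((a+1) :: 1 :: (b+1) :: t') = hjcf (a :: b :: t') := by
          have hr : hjcf (a :: b :: t') = (a : ℚ) - (hjcf (b :: t'))⁻¹ :=
            hjcf_cons a (b :: t')
          rw [hjcf_cons, h1, hr]
          push_cast
          generalize hjcf (b :: t') = x at hx hxne ⊢
          have hx1 : x + 1 ≠ 0 := by linarith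
          field_simp
          ring
        refine ⟨heq, ?_⟩
        intro k hk hk'
        match k with
        | 0 => omega
        | 1 => exact h1pos
        | 2 => exact hb1pos
        | (m+3) =>
          have hlen : (psi 1 (a :: b :: t')).length = t'.length + 3 := rfl
          rw [hlen] at hk'
          have hm : m + 2 < (a :: b :: t').length := by
            simp only [List.length_cons]
            omega
          have hold := hadm (m+2) (by omega) hm
          have hdrop1 : List.drop (m+3) (psi 1 (a :: b :: t')) = List.drop m t' := rfl
          have hdrop2 : List.drop (m+2) (a :: b :: t') = List.drop m t' := rfl
          rw [hdrop1]; rw [hdrop2] at hold; exact hold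
    | (k+2) =>
      have ht1 : 1 ≤ t.length := by
        simp only [List.length_cons] at hj'; omega
      have htadm : Admissible t := by
        intro m hm hm'
        have := hadm (m+1) (by omega) (by simp only [List.length_cons]; omega)
        simpa using this
      obtain ⟨heq, hadm'⟩ := ih (k+1) (by omega)
        (by simp only [List.length_cons] at hj'; omega) htadm
      have hpsieq : psi (k+2) (a :: t) = a :: psi (k+1) t := rfl
      constructor
      · rw [hpsieq, hjcf_cons, hjcf_cons, heq]
      · intro m hm hm'
        rw [hpsieq] at hm' ⊢
        match m with
        | 0 => omega
        | 1 =>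
          have : List.drop 1 (a :: psi (k+1) t) = psi (k+1) t := rfl
          rw [this, heq]
          have := hadm 1 le_rfl (by simp only [List.length_cons]; omega)
          simpa using this
        | (m'+2) =>
          have hdrop : List.drop (m'+2) (a :: psi (k+1) t)
              = List.drop (m'+1) (psi (k+1) t) := rfl
          rw [hdrop]
          exact hadm' (m'+1) (by omega)
            (by simp only [List.length_cons] at hm'; omega)

/-- A strict blowup of an admissible positive tuple with continued fraction zero is again
admissible with continued fraction zero. -/
theorem psi_preserves_admissible_zero (n : List ℤ) (j : ℕ)
    (hpos : ∀ x ∈ n, 0 < x) (hadm : Admissible n) (hcf : hjcf n = 0)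
    (hj : 1 ≤ j) (hj' : j ≤ n.length) :
    Admissible (psi j n) ∧ hjcf (psi j n) = 0 := by
  obtain ⟨heq, hadm'⟩ := psi_main n j hj hj' hadm
  exact ⟨hadm', heq.trans hcf⟩
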